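/- Let J be an m×m symmetric positive semidefinite matrix, b ∈ ℝ^m, and λ ≥ 0. Suppose that for every v in the kernel of J one has |bᵀ v| ≤ λ ‖v‖₁. Then the function d(w) = (1/2) wᵀ J w − wᵀ b + λ ∑_j |w_j| is bounded below on ℝ^m. -/

import Mathlib

open Matrix Finset

/-- Penalized score distance criterion d(w) = (1/2) wᵀ J w − wᵀ b + λ ∑ |w_j|. -/
noncomputable def pdist {m : ℕ} (J : Matrix (Fin m) (Fin m) ℝ) (b : Fin m → ℝ) (lam : ℝ)
    (w : Fin m → ℝ) : ℝ :=
  (1 / 2) * (w ⬝ᵥ J.mulVec w) - w ⬝ᵥ b + lam * ∑ j, |w j|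

lemma aux_quad_bound (C c r t : ℝ) (hC : 0 ≤ C) (hc : 0 ≤ c) (hr : 0 ≤ r)
    (htcr : t ≤ c * r) : -(C * c) ^ 2 / 2 ≤ 1 / 2 * r ^ 2 - C * t := by
  nlinarith [sq_nonneg (r - C * c), mul_le_mul_of_nonneg_left htcr hC]

theorem stmt13 {m : ℕ} (J : Matrix (Fin m) (Fin m) ℝ) (b : Fin m → ℝ) (lam : ℝ)
    (hJ : J.PosSemidef) (hlam : 0 ≤ lam)
    (hker : ∀ v : Fin m → ℝ, J.mulVec v = 0 → |b ⬝ᵥ v| ≤ lam * ∑ j, |v j|) :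
    BddBelow (Set.range (pdist J b lam)) := by
  classical
  open scoped MatrixOrder in set S := CFC.sqrt J with hSdef
  open scoped MatrixOrder in have hSsym : Sᵀ = S := (CFC.sqrt_nonneg J).posSemidef.isHermitian
  open scoped MatrixOrder in have hSS : S * S = J := CFC.sqrt_mul_sqrt_self J hJ.nonneg
  -- quadratic identity
  have hquad : ∀ w : Fin m → ℝ, w ⬝ᵥ J.mulVec w = (S.mulVec w) ⬝ᵥ (S.mulVec w) := by
    intro w
    conv_lhs => rw [← hSS, ← Matrix.mulVec_mulVec, Matrix.dotProduct_mulVec, ← hSsym,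
      Matrix.vecMul_transpose, hSsym]
  -- set up Euclidean space machinery
  let E := EuclideanSpace ℝ (Fin m)
  let e : E ≃ₗ[ℝ] (Fin m → ℝ) := WithLp.linearEquiv 2 ℝ (Fin m → ℝ)
  let T : E →ₗ[ℝ] E := e.symm.toLinearMap ∘ₗ S.mulVecLin ∘ₗ e.toLinearMap
  let K : Submodule ℝ E := LinearMap.ker T
  let T' : ↥Kᗮ →ₗ[ℝ] E := T.domRestrict Kᗮ
  have hT'inj : LinearMap.ker T' = ⊥ := by
    rw [LinearMap.ker_eq_bot']
    rintro ⟨x, hx⟩ hx0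
    have hxK : x ∈ K := by
      simpa [T', K, LinearMap.mem_ker] using hx0
    have : (inner ℝ x x : ℝ) = 0 := by
      simpa using (Submodule.mem_orthogonal K x).mp hx x hxK
    exact Subtype.ext (inner_self_eq_zero.mp this)
  obtain ⟨c, hc0, hanti⟩ := T'.exists_antilipschitzWith hT'inj
  -- constants
  set B : ℝ := ∑ j, |b j| with hBdef
  have hB0 : (0:ℝ) ≤ B := Finset.sum_nonneg fun j _ => abs_nonneg _
  set C : ℝ := B + lam * m with hCdef
  have hC0 : (0:ℝ) ≤ C := by positivity
  refine ⟨-(C * c)^2 / 2, ?_⟩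
  rintro x ⟨w, rfl⟩
  -- decompose w
  obtain ⟨v, hv, u, hu, hvu⟩ := K.exists_add_mem_mem_orthogonal (e.symm w)
  have hw : w = e v + e u := by
    have := congrArg e hvu
    simpa using this
  set v' : Fin m → ℝ := e v with hv'
  set u' : Fin m → ℝ := e u with hu'
  have hSv : S.mulVec v' = 0 := by
    have : T v = 0 := hv
    have := congrArg e this
    simpa [T, e] using this
  have hJv : J.mulVec v' = 0 := by
    rw [← hSS, ← Matrix.mulVec_mulVec, hSv, Matrix.mulVec_zero]
  have hbv : |b ⬝ᵥ v'| ≤ lam * ∑ j, |v' j| := hker v' hJv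
  have hSw : S.mulVec w = S.mulVec u' := by
    rw [hw, Matrix.mulVec_add, hSv, zero_add]
  -- norms
  set t : ℝ := ‖u‖ with ht
  have ht0 : 0 ≤ t := norm_nonneg _
  -- each coordinate bounded by norm
  have hcoord : ∀ j, |u' j| ≤ t := by
    intro j
    have h1 : |u' j| = Real.sqrt ((u' j)^2) := (Real.sqrt_sq_eq_abs _).symm
    have h2 : (u' j)^2 ≤ ∑ i, (u' i)^2 :=
      Finset.single_le_sum (f := fun i => (u' i)^2) (fun i _ => sq_nonneg _) (mem_univ j)
    have h3 : t = Real.sqrt (∑ i, (u' i)^2) := by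
      rw [ht, EuclideanSpace.norm_eq]
      congr 1
      exact Finset.sum_congr rfl fun i _ => by rw [Real.norm_eq_abs, sq_abs]; rfl
    rw [h1, h3]
    exact Real.sqrt_le_sqrt h2
  -- quadratic term
  have hTu : e (T u) = S.mulVec u' := rfl
  have hquadw : w ⬝ᵥ J.mulVec w = ‖T u‖^2 := by
    rw [hquad, hSw, ← hTu]
    rw [EuclideanSpace.norm_eq, Real.sq_sqrt (Finset.sum_nonneg fun i _ => by positivity)]
    refine Finset.sum_congr rfl fun i _ => ?_
    rw [Real.norm_eq_abs, sq_abs, pow_two]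
    rfl
  set r : ℝ := ‖T u‖ with hr
  have hr0 : 0 ≤ r := norm_nonneg _
  have htr : t ≤ c * r := by
    have := hanti.le_mul_dist ⟨u, hu⟩ 0
    simpa [T', dist_eq_norm] using this
  -- linear term bounds
  have hub : |u' ⬝ᵥ b| ≤ t * B := by
    calc |u' ⬝ᵥ b| ≤ ∑ j, |u' j * b j| := Finset.abs_sum_le_sum_abs _ _
    _ ≤ ∑ j, t * |b j| := by
        refine Finset.sum_le_sum fun j _ => ?_
        rw [abs_mul]
        exact mul_le_mul_of_nonneg_right (hcoord j) (abs_nonneg _)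
    _ = t * B := by rw [← Finset.mul_sum]
  have hwb : w ⬝ᵥ b = u' ⬝ᵥ b + v' ⬝ᵥ b := by
    rw [hw, add_dotProduct]; ring
  have hbv' : |v' ⬝ᵥ b| ≤ lam * ∑ j, |v' j| := by
    rwa [dotProduct_comm] at hbv
  -- l1 bound
  have hl1 : ∑ j, |v' j| - (m : ℝ) * t ≤ ∑ j, |w j| := by
    have h1 : ∀ j, |v' j| - t ≤ |w j| := by
      intro j
      have : |v' j| ≤ |w j| + |u' j| := by
        have : v' j = w j + (- u' j) := by rw [hw]; simp [v', u']
        calc |v' j| = |w j + (- u' j)| := by rw [this]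
        _ ≤ |w j| + |(- u' j)| := abs_add_le _ _
        _ = |w j| + |u' j| := by rw [abs_neg]
      linarith [hcoord j]
    calc ∑ j, |v' j| - (m : ℝ) * t = ∑ j, (|v' j| - t) := by
          rw [Finset.sum_sub_distrib]
          simp [mul_comm]
    _ ≤ ∑ j, |w j| := Finset.sum_le_sum fun j _ => h1 j
  -- put it together
  have key : pdist J b lam w ≥ (1/2) * r^2 - C * t := by
    have e1 : pdist J b lam w = (1/2) * r^2 - (u' ⬝ᵥ b + v' ⬝ᵥ b) + lam * ∑ j, |w j| := by
      rw [pdist, hquadw, hwb]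
    rw [e1]
    have h2 : lam * (∑ j, |v' j| - (m:ℝ) * t) ≤ lam * ∑ j, |w j| :=
      mul_le_mul_of_nonneg_left hl1 hlam
    have h3 : -(t * B) ≤ -(u' ⬝ᵥ b) := by linarith [(abs_le.mp hub).2, (abs_le.mp hub).1, neg_abs_le (u' ⬝ᵥ b)]
    nlinarith [(abs_le.mp hub).2, (le_abs_self (v' ⬝ᵥ b)).trans hbv', hC0, ht0]
  have final : -(C * (c:ℝ))^2 / 2 ≤ (1/2) * r^2 - C * t :=
    aux_quad_bound C c r t hC0 c.coe_nonneg hr0 htr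
  linarith [key, final]
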